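/- If H ⊑* G and Σ is a finite set of finite-dimensional closed subsets of H, then Δ_G(Σ_G) = Δ_H(Σ), where Σ_G = {cl_G(E) : E ∈ Σ}. -/

import Mathlib

open scoped Classical

/-- A combinatorial pregeometry (matroid) on the ground type `α`, given by a
dimension (rank) function on finite subsets. -/
structure Pregeometry (α : Type*) [DecidableEq α] where
  dim : Finset α → ℕ
  dim_empty : dim ∅ = 0
  dim_le_insert : ∀ (A : Finset α) (x : α), dim A ≤ dim (insert x A)
  insert_le_dim : ∀ (A : Finset α) (x : α), dim (insert x A) ≤ dim A + 1
  submodular : ∀ A B : Finset α, dim (A ∪ B) + dim (A ∩ B) ≤ dim A + dim B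

namespace Pregeometry

variable {α : Type*} [DecidableEq α] (G : Pregeometry α)

/-- Closure of an arbitrary subset. -/
def cl (Y : Set α) : Set α :=
  {x | ∃ A : Finset α, ↑A ⊆ Y ∧ G.dim (insert x A) = G.dim A}

/-- `Y` is closed (in the ambient pregeometry `G`). -/
def IsClosed (Y : Set α) : Prop := G.cl Y = Y

/-- `X` is a closed set of the subpregeometry of `G` induced on `P`
(whose closure operator is `Y ↦ cl Y ∩ P`). -/
def IsClosedIn (P X : Set α) : Prop := X ⊆ P ∧ G.cl X ∩ P = X

/-- Dimension of an arbitrary subset, with value `⊤` when infinite-dimensional. -/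
noncomputable def edim (Y : Set α) : ℕ∞ :=
  ⨆ (A : Finset α) (_ : ↑A ⊆ Y), (G.dim A : ℕ∞)

/-- The (natural number) dimension of a finite-dimensional subset. -/
noncomputable def sdim (Y : Set α) : ℕ := (G.edim Y).toNat

/-- The alternating inclusion–exclusion sum
`Δ_G(Σ) = Σ_{∅ ≠ S ⊆ Σ} (-1)^{|S|+1} d(⋂ S)` of a finite collection of sets. -/
noncomputable def flatSum (Sig : Finset (Set α)) : ℤ :=
  ∑ S ∈ Sig.powerset.filter (· ≠ ∅),
    (-1) ^ (S.card + 1) * (G.sdim (⋂₀ ↑S) : ℤ)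

/-- `P ⊑* Q`: for the subpregeometries induced on `P ⊆ Q`, the dimension of the
intersection of two closed sets of `P` equals the dimension of the intersection
of their closures in `Q` (the closure of `X` in `Q` being `cl X ∩ Q`). -/
def SqStar (P Q : Set α) : Prop := P ⊆ Q ∧
  ∀ X₁ X₂ : Set α, G.IsClosedIn P X₁ → G.IsClosedIn P X₂ →
    G.edim (X₁ ∩ X₂) = G.edim (G.cl X₁ ∩ G.cl X₂ ∩ Q)

/-- `P ⊑ Q`: `P` is strongly embedded in `Q`: for every finite collection `Σ` of
finite-dimensional closed sets of `Q`, `Δ_P(Σ_P) ≤ Δ_Q(Σ)` where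
`Σ_P = {E ∩ P : E ∈ Σ}`. -/
def Sq (P Q : Set α) : Prop := P ⊆ Q ∧
  ∀ Sig : Finset (Set α), (∀ E ∈ Sig, G.IsClosedIn Q E) →
    (∀ E ∈ Sig, G.edim E ≠ ⊤) →
    G.flatSum (Sig.image (· ∩ P)) ≤ G.flatSum Sig

/-- The subpregeometry induced on `P` is flat: every finite collection of
finite-dimensional closed sets satisfies `d(⋃ Σ) ≤ Δ(Σ)`. -/
def FlatIn (P : Set α) : Prop :=
  ∀ Sig : Finset (Set α), (∀ E ∈ Sig, G.IsClosedIn P E) →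
    (∀ E ∈ Sig, G.edim E ≠ ⊤) →
    (G.sdim (⋃₀ ↑Sig) : ℤ) ≤ G.flatSum Sig

/-- The α-function of the subpregeometry of `G` induced on `P`:
`α(X) = |X| − d(X) − Σ_{Y ⊊ X closed} α(Y)`. -/
noncomputable def alphaIn (P : Set α) (X : Finset α) : ℤ :=
  (X.card : ℤ) - (G.dim X : ℤ) -
    ∑ Y ∈ (X.powerset.filter fun Y => Y ≠ X ∧ G.IsClosedIn P ↑Y).attach,
      alphaIn P Y.1
termination_by X.card
decreasing_by
  have h := Y.2
  simp only [Finset.mem_filter, Finset.mem_powerset] at h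
  exact Finset.card_lt_card (lt_of_le_of_ne h.1 h.2.1)

end Pregeometry

/-- A hypergraph on the vertex type `α`: a set of nonempty finite edges. -/
structure EdgeHypergraph (α : Type*) where
  edges : Set (Finset α)
  nonempty_edges : ∀ e ∈ edges, e ≠ ∅

namespace EdgeHypergraph

variable {α : Type*} [DecidableEq α] (A : EdgeHypergraph α)

/-- The set of edges contained in a set of vertices. -/
def edgesIn (P : Set α) : Set (Finset α) := {e | e ∈ A.edges ∧ ↑e ⊆ P}

/-- The predimension `δ(P) = |P| − |R[P]|` of a finite set of vertices. -/
noncomputable def delta (P : Finset α) : ℤ :=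
  (P.card : ℤ) - (A.edgesIn ↑P).ncard

/-- The relative predimension `δ(L/P) = |L∖P| − |R[L∪P]∖R[P]|`. -/
noncomputable def deltaRel (L : Finset α) (P : Set α) : ℤ :=
  ((↑L \ P : Set α).ncard : ℤ) -
    ({e | e ∈ A.edges ∧ ↑e ⊆ ↑L ∪ P ∧ ¬ ↑e ⊆ P} : Set (Finset α)).ncard

/-- `P` is self-sufficient in `A`: `δ(X/P) ≥ 0` for every finite `X`, stated so
as to be meaningful even when infinitely many edges are involved. -/
def SelfSuff (P : Set α) : Prop :=
  ∀ X : Finset α, ∀ Es : Finset (Finset α),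
    (∀ e ∈ Es, e ∈ A.edges ∧ ↑e ⊆ ↑X ∪ P ∧ ¬ ↑e ⊆ P) →
    (Es.card : ℤ) ≤ ((↑X \ P : Set α).ncard : ℤ)

/-- The dimension function associated to a hypergraph:
`d(X) = inf {δ(B) : X ⊆ B finite}`. -/
noncomputable def hdim (X : Finset α) : ℤ :=
  sInf {d : ℤ | ∃ B : Finset α, X ⊆ B ∧ d = A.delta B}

/-- The induced subhypergraph on a set `P` of vertices (keeping `α` as the
ambient vertex type). -/
def restrict (P : Set α) : EdgeHypergraph α :=
  ⟨{e | e ∈ A.edges ∧ ↑e ⊆ P}, fun e he => A.nonempty_edges e he.1⟩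

/-- A pregeometry `G` is represented by the hypergraph `A` if the associated
dimension function of `A` is the dimension function of `G`. -/
def Represents (G : Pregeometry α) : Prop :=
  ∀ X : Finset α, (G.dim X : ℤ) = A.hdim X

end EdgeHypergraph

namespace Pregeometry

variable {α : Type*} [DecidableEq α] (G : Pregeometry α)

lemma dim_mono {A B : Finset α} (h : A ⊆ B) : G.dim A ≤ G.dim B := by
  have key : ∀ C : Finset α, G.dim A ≤ G.dim (A ∪ C) := by
    intro C
    induction C using Finset.induction_on with
    | empty => simp
    | @insert a s ha ih =>
      calc G.dim A ≤ G.dim (A ∪ s) := ih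
        _ ≤ G.dim (insert a (A ∪ s)) := G.dim_le_insert _ _
        _ = G.dim (A ∪ insert a s) := by rw [Finset.union_insert]
  have := key B
  rwa [Finset.union_eq_right.mpr h] at this

lemma dim_union_eq_of {A B B' : Finset α} (h : G.dim (A ∪ B) = G.dim B)
    (hBB : B ⊆ B') : G.dim (A ∪ B') = G.dim B' := by
  have hsub := G.submodular (A ∪ B) B'
  have h1 : A ∪ B ∪ B' = A ∪ B' := by
    rw [Finset.union_assoc, Finset.union_eq_right.mpr hBB]
  rw [h1, h] at hsub
  have h3 : G.dim B ≤ G.dim ((A ∪ B) ∩ B') :=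
    G.dim_mono (Finset.subset_inter Finset.subset_union_right hBB)
  have h4 : G.dim B' ≤ G.dim (A ∪ B') := G.dim_mono Finset.subset_union_right
  omega

lemma subset_cl (X : Set α) : X ⊆ G.cl X := by
  intro x hx
  refine ⟨{x}, by simpa using hx, by rw [Finset.insert_eq_self.mpr (Finset.mem_singleton_self x)]⟩

lemma cl_mono {X Y : Set α} (h : X ⊆ Y) : G.cl X ⊆ G.cl Y := by
  rintro x ⟨A, hA, hd⟩
  exact ⟨A, hA.trans h, hd⟩

lemma dim_le_edim {X : Set α} {A : Finset α} (hA : ↑A ⊆ X) :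
    (G.dim A : ℕ∞) ≤ G.edim X :=
  le_iSup₂_of_le A hA le_rfl

lemma edim_mono {X Y : Set α} (h : X ⊆ Y) : G.edim X ≤ G.edim Y := by
  refine iSup₂_le fun A hA => G.dim_le_edim (hA.trans h)

lemma exists_dim_eq_edim {X : Set α} (h : G.edim X ≠ ⊤) :
    ∃ A : Finset α, ↑A ⊆ X ∧ (G.dim A : ℕ∞) = G.edim X := by
  obtain ⟨n, hn⟩ : ∃ n : ℕ, G.edim X = (n : ℕ∞) := by
    cases hc : G.edim X with
    | top => exact absurd hc h
    | coe n => exact ⟨n, rfl⟩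
  match n, hn with
  | 0, hn => exact ⟨∅, by simp, by simp [hn, G.dim_empty]⟩
  | (m + 1), hn =>
    have hlt : (m : ℕ∞) < G.edim X := by
      rw [hn]; exact_mod_cast Nat.lt_succ_self m
    rw [edim] at hlt
    obtain ⟨A, hlt⟩ := lt_iSup_iff.mp hlt
    obtain ⟨hA, hlt⟩ := lt_iSup_iff.mp hlt
    refine ⟨A, hA, ?_⟩
    have hle : (G.dim A : ℕ∞) ≤ (m + 1 : ℕ) := hn ▸ G.dim_le_edim hA
    have h1 : m < G.dim A := by exact_mod_cast hlt
    have h2 : G.dim A ≤ m + 1 := by exact_mod_cast hle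
    have : G.dim A = m + 1 := by omega
    rw [this, hn]

lemma exists_witness {X : Set α} {A : Finset α} (hA : ↑A ⊆ G.cl X) :
    ∃ C : Finset α, ↑C ⊆ X ∧ G.dim (A ∪ C) = G.dim C := by
  induction A using Finset.induction_on with
  | empty => exact ⟨∅, by simp, by simp⟩
  | @insert a A ha ih =>
    have hmem : a ∈ G.cl X := hA (by simp)
    obtain ⟨Ax, hAx, hdx⟩ := hmem
    obtain ⟨C, hC, hdC⟩ := ih (fun y hy => hA (by simp [hy]))
    refine ⟨Ax ∪ C, by simp [Set.union_subset_iff]; exact ⟨hAx, hC⟩, ?_⟩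
    have h1 : G.dim (A ∪ (Ax ∪ C)) = G.dim (Ax ∪ C) :=
      G.dim_union_eq_of hdC Finset.subset_union_right
    have h2 : G.dim ({a} ∪ (A ∪ (Ax ∪ C))) = G.dim (A ∪ (Ax ∪ C)) := by
      refine G.dim_union_eq_of (B := Ax) ?_ ?_
      · rw [← Finset.insert_eq]; exact hdx
      · exact Finset.subset_union_left.trans Finset.subset_union_right
    have h3 : insert a A ∪ (Ax ∪ C) = {a} ∪ (A ∪ (Ax ∪ C)) := by
      rw [Finset.insert_union, Finset.insert_eq]
    rw [h3, h2, h1]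

lemma edim_cl (X : Set α) : G.edim (G.cl X) = G.edim X := by
  refine le_antisymm ?_ (G.edim_mono (G.subset_cl X))
  refine iSup₂_le fun A hA => ?_
  obtain ⟨C, hC, hdC⟩ := G.exists_witness hA
  calc (G.dim A : ℕ∞) ≤ (G.dim (A ∪ C) : ℕ∞) := by
        exact_mod_cast G.dim_mono Finset.subset_union_left
    _ = (G.dim C : ℕ∞) := by rw [hdC]
    _ ≤ G.edim X := G.dim_le_edim hC

lemma dim_insert_of_not_mem_cl {X : Set α} {A : Finset α} {x : α}
    (hx : x ∉ G.cl X) (hA : ↑A ⊆ X) : G.dim (insert x A) = G.dim A + 1 := by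
  have hne : G.dim (insert x A) ≠ G.dim A := fun h => hx ⟨A, hA, h⟩
  have h1 := G.dim_le_insert A x
  have h2 := G.insert_le_dim A x
  omega

lemma eq_cl_of_edim_eq {X F' : Set α} (hfin : G.edim X ≠ ⊤) (hsub : G.cl X ⊆ F')
    (heq : G.edim F' = G.edim X) : F' = G.cl X := by
  refine Set.Subset.antisymm ?_ hsub
  intro x hx
  by_contra hxc
  obtain ⟨A, hA, hdA⟩ := G.exists_dim_eq_edim hfin
  have h1 : G.dim (insert x A) = G.dim A + 1 := G.dim_insert_of_not_mem_cl hxc hA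
  have h2 : ↑(insert x A) ⊆ F' := by
    intro y hy
    simp only [Finset.coe_insert, Set.mem_insert_iff] at hy
    rcases hy with rfl | hy
    · exact hx
    · exact hsub (G.subset_cl X (hA hy))
  have h3 : (G.dim (insert x A) : ℕ∞) ≤ G.edim F' := G.dim_le_edim h2
  rw [heq, ← hdA, h1] at h3
  have : G.dim A + 1 ≤ G.dim A := by exact_mod_cast h3
  omega

lemma isClosedIn_sInter {H : Set α} {T : Set (Set α)} (hne : T.Nonempty)
    (h : ∀ E ∈ T, G.IsClosedIn H E) : G.IsClosedIn H (⋂₀ T) := by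
  obtain ⟨E0, hE0⟩ := hne
  constructor
  · exact (Set.sInter_subset_of_mem hE0).trans (h E0 hE0).1
  · apply Set.Subset.antisymm
    · rintro x ⟨hx1, hx2⟩
      rw [Set.mem_sInter]
      intro E hE
      have hxE : x ∈ G.cl E := G.cl_mono (Set.sInter_subset_of_mem hE) hx1
      have := (h E hE).2
      rw [← this]
      exact ⟨hxE, hx2⟩
    · intro x hx
      exact ⟨G.subset_cl _ hx, ((Set.sInter_subset_of_mem hE0).trans (h E0 hE0).1) hx⟩

lemma cl_inter_of_sqStar {H X₁ X₂ : Set α} (hH : G.SqStar H Set.univ)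
    (h1 : G.IsClosedIn H X₁) (h2 : G.IsClosedIn H X₂)
    (hfin : G.edim (X₁ ∩ X₂) ≠ ⊤) :
    G.cl X₁ ∩ G.cl X₂ = G.cl (X₁ ∩ X₂) := by
  have hdim := hH.2 X₁ X₂ h1 h2
  rw [Set.inter_univ] at hdim
  refine G.eq_cl_of_edim_eq hfin ?_ ?_
  · exact Set.subset_inter (G.cl_mono Set.inter_subset_left)
      (G.cl_mono Set.inter_subset_right)
  · exact hdim.symm

lemma cl_sInter_of_sqStar {H : Set α} (hH : G.SqStar H Set.univ) :
    ∀ S : Finset (Set α), (∀ E ∈ S, G.IsClosedIn H E) → (∀ E ∈ S, G.edim E ≠ ⊤) →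
    S.Nonempty → G.cl (⋂₀ ↑S) = ⋂₀ ↑(S.image G.cl) := by
  intro S
  induction S using Finset.induction_on with
  | empty => intro _ _ h; simp at h
  | @insert E S hES ih =>
    intro hclS hfdS _
    by_cases hS : S = ∅
    · subst hS; simp
    · have hSne : S.Nonempty := Finset.nonempty_iff_ne_empty.mpr hS
      have hX2 : G.IsClosedIn H (⋂₀ ↑S) :=
        G.isClosedIn_sInter (Finset.coe_nonempty.mpr hSne)
          (fun E' hE' => hclS E' (Finset.mem_insert_of_mem hE'))
      have hE : G.IsClosedIn H E := hclS E (Finset.mem_insert_self _ _)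
      have hfinE : G.edim (E ∩ ⋂₀ ↑S) ≠ ⊤ := by
        intro htop
        exact hfdS E (Finset.mem_insert_self _ _)
          (top_le_iff.mp (htop ▸ G.edim_mono Set.inter_subset_left))
      have key := G.cl_inter_of_sqStar hH hE hX2 hfinE
      rw [Finset.coe_insert, Set.sInter_insert, ← key,
        ih (fun E' hE' => hclS E' (Finset.mem_insert_of_mem hE'))
          (fun E' hE' => hfdS E' (Finset.mem_insert_of_mem hE')) hSne,
        Finset.image_insert, Finset.coe_insert, Set.sInter_insert]

end Pregeometry

/-- if `H ⊑* G` and `Σ` is a finite set of finite-dimensional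
closed subsets of `H`, then `Δ_G(Σ_G) = Δ_H(Σ)` where `Σ_G = {cl_G E : E ∈ Σ}`. -/
theorem flatSum_image_cl_of_sqStar {α : Type*} [DecidableEq α] (G : Pregeometry α)
    (H : Set α) (hH : G.SqStar H Set.univ) (Sig : Finset (Set α))
    (hcl : ∀ E ∈ Sig, G.IsClosedIn H E) (hfd : ∀ E ∈ Sig, G.edim E ≠ ⊤) :
    G.flatSum (Sig.image G.cl) = G.flatSum Sig := by
  classical
  have hinj : ∀ E ∈ Sig, ∀ E' ∈ Sig, G.cl E = G.cl E' → E = E' := by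
    intro E hE E' hE' h
    rw [← (hcl E hE).2, ← (hcl E' hE').2, h]
  unfold Pregeometry.flatSum
  refine (Finset.sum_bij (fun S _ => S.image G.cl) ?_ ?_ ?_ ?_).symm
  · intro S hS
    simp only [Finset.mem_filter, Finset.mem_powerset] at hS ⊢
    exact ⟨Finset.image_subset_image hS.1, by
      simpa [Finset.image_eq_empty] using hS.2⟩
  · intro S₁ hS₁ S₂ hS₂ h
    have h' : S₁.image G.cl = S₂.image G.cl := h
    simp only [Finset.mem_filter, Finset.mem_powerset] at hS₁ hS₂
    ext E
    constructor
    · intro hE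
      have : G.cl E ∈ S₂.image G.cl := h' ▸ Finset.mem_image_of_mem _ hE
      obtain ⟨E', hE', hEE'⟩ := Finset.mem_image.mp this
      rwa [← hinj E' (hS₂.1 hE') E (hS₁.1 hE) hEE']
    · intro hE
      have : G.cl E ∈ S₁.image G.cl := h'.symm ▸ Finset.mem_image_of_mem _ hE
      obtain ⟨E', hE', hEE'⟩ := Finset.mem_image.mp this
      rwa [← hinj E' (hS₁.1 hE') E (hS₂.1 hE) hEE']
  · intro T hT
    simp only [Finset.mem_filter, Finset.mem_powerset] at hT
    refine ⟨Sig.filter (fun E => G.cl E ∈ T), ?_, ?_⟩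
    · simp only [Finset.mem_filter, Finset.mem_powerset]
      refine ⟨Finset.filter_subset _ _, ?_⟩
      obtain ⟨t, ht⟩ := Finset.nonempty_iff_ne_empty.mpr hT.2
      obtain ⟨E, hE, hEt⟩ := Finset.mem_image.mp (hT.1 ht)
      have : E ∈ Sig.filter (fun E => G.cl E ∈ T) := by
        simp only [Finset.mem_filter]
        exact ⟨hE, hEt ▸ ht⟩
      exact Finset.nonempty_iff_ne_empty.mp ⟨E, this⟩
    · ext t
      simp only [Finset.mem_image, Finset.mem_filter]
      constructor
      · rintro ⟨E, ⟨hE, hET⟩, rfl⟩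
        exact hET
      · intro ht
        obtain ⟨E, hE, hEt⟩ := Finset.mem_image.mp (hT.1 ht)
        exact ⟨E, ⟨hE, hEt ▸ ht⟩, hEt⟩
  · intro S hS
    simp only [Finset.mem_filter, Finset.mem_powerset] at hS
    have hcard : (S.image G.cl).card = S.card :=
      Finset.card_image_of_injOn
        (fun E hE E' hE' h => hinj E (hS.1 hE) E' (hS.1 hE') h)
    have hSne : S.Nonempty := Finset.nonempty_iff_ne_empty.mpr hS.2
    have hsdim : G.sdim (⋂₀ ↑(S.image G.cl)) = G.sdim (⋂₀ (↑S : Set (Set α))) := by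
      unfold Pregeometry.sdim
      rw [← G.cl_sInter_of_sqStar hH S (fun E hE => hcl E (hS.1 hE))
        (fun E hE => hfd E (hS.1 hE)) hSne, G.edim_cl]
    rw [hcard, hsdim]
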